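/- Let y be a nonzero real number. Then n² · | 1/((n+1)·tan(|y|·ln((n+2)/(n+1)))) − sqrt( 1/n² + 1/(n²·tan(|y|·ln((n+1)/n))²) ) | converges, as the natural number n → ∞, to (1/2)·|y + 1/y|. -/

import Mathlib

open Filter Real Topology

lemma aux_ne_top : Tendsto (fun x : ℝ => x) (𝓝[≠] (0:ℝ)) (𝓝 0) :=
  tendsto_id.mono_left nhdsWithin_le_nhds

lemma aux_small : ∀ᶠ x : ℝ in 𝓝[≠] (0:ℝ), |x| ≤ 1 ∧ x ≠ 0 := by
  have h1 : ∀ᶠ x : ℝ in 𝓝 (0:ℝ), |x| ≤ 1 := by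
    have : Tendsto (fun x : ℝ => |x|) (𝓝 0) (𝓝 0) := by
      simpa using continuous_abs.tendsto (0:ℝ)
    exact this.eventually_le_const (by norm_num)
  exact (h1.filter_mono nhdsWithin_le_nhds).and (eventually_mem_nhdsWithin.mono fun x hx => hx)

lemma aux_abs_tendsto : Tendsto (fun x : ℝ => |x|) (𝓝[≠] (0:ℝ)) (𝓝 0) := by
  have : Tendsto (fun x : ℝ => |x|) (𝓝 0) (𝓝 0) := by
    simpa using continuous_abs.tendsto (0:ℝ)
  exact this.mono_left nhdsWithin_le_nhds

lemma aux_sin_cube :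
    Tendsto (fun x : ℝ => (Real.sin x - x) / x ^ 3) (𝓝[≠] (0:ℝ)) (𝓝 (-(1/6))) := by
  have hb : ∀ᶠ x : ℝ in 𝓝[≠] (0:ℝ),
      ‖(Real.sin x - x) / x ^ 3 - (-(1/6))‖ ≤ |x| * (5/96) := by
    filter_upwards [aux_small] with x ⟨hx1, hx0⟩
    have hx3 : x ^ 3 ≠ 0 := pow_ne_zero _ hx0
    have heq : (Real.sin x - x) / x ^ 3 - (-(1/6)) = (Real.sin x - (x - x^3/6)) / x ^ 3 := by
      field_simp; ring
    rw [Real.norm_eq_abs, heq, abs_div, abs_pow]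
    have hb := Real.sin_bound hx1
    have h4 : |x| ^ 4 = |x| ^ 3 * |x| := by ring
    rw [div_le_iff₀ (by positivity : (0:ℝ) < |x| ^ 3)]
    calc |Real.sin x - (x - x ^ 3 / 6)| ≤ |x| ^ 4 * (5/96) := le_trans hb (by have h0 : 0 ≤ |x| ^ 4 := (by positivity); have h6 := mul_nonneg h0 (sub_nonneg.2 hx1); nlinarith [pow_succ |x| 4])
      _ = |x| * (5/96) * |x| ^ 3 := by ring
  exact tendsto_sub_nhds_zero_iff.mp
    (squeeze_zero_norm' hb (by simpa using aux_abs_tendsto.mul_const (5/96 : ℝ)))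

lemma aux_tan_cube :
    Tendsto (fun x : ℝ => (Real.tan x - x) / x ^ 3) (𝓝[≠] (0:ℝ)) (𝓝 (1/3)) := by
  have hmid : Tendsto (fun x : ℝ => (Real.sin x - x * Real.cos x) / x ^ 3) (𝓝[≠] (0:ℝ))
      (𝓝 (1/3)) := by
    have hb : ∀ᶠ x : ℝ in 𝓝[≠] (0:ℝ),
        ‖(Real.sin x - x * Real.cos x) / x ^ 3 - 1/3‖ ≤ |x| * (10/96) := by
      filter_upwards [aux_small] with x ⟨hx1, hx0⟩
      have hx3 : x ^ 3 ≠ 0 := pow_ne_zero _ hx0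
      have heq : (Real.sin x - x * Real.cos x) / x ^ 3 - 1/3 =
          ((Real.sin x - (x - x^3/6)) - x * (Real.cos x - (1 - x^2/2))) / x ^ 3 := by
        field_simp; ring
      rw [Real.norm_eq_abs, heq, abs_div, abs_pow]
      have hbs := Real.sin_bound hx1
      have hbc := Real.cos_bound hx1
      rw [div_le_iff₀ (by positivity : (0:ℝ) < |x| ^ 3)]
      have h5 : |x| ^ 5 ≤ |x| ^ 4 := by
        calc |x| ^ 5 = |x| ^ 4 * |x| := by ring
          _ ≤ |x| ^ 4 * 1 := by gcongr
          _ = |x| ^ 4 := mul_one _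
      calc |Real.sin x - (x - x ^ 3 / 6) - x * (Real.cos x - (1 - x ^ 2 / 2))|
          ≤ |Real.sin x - (x - x ^ 3 / 6)| + |x * (Real.cos x - (1 - x ^ 2 / 2))| :=
            abs_sub _ _
        _ ≤ |x| ^ 4 * (5/96) + |x| * (|x| ^ 4 * (5/96)) := by
            rw [abs_mul]; gcongr
            exact le_trans hbs (by have h0 : 0 ≤ |x| ^ 4 := (by positivity); have h6 := mul_nonneg h0 (sub_nonneg.2 hx1); nlinarith [pow_succ |x| 4])
        _ = |x| ^ 4 * (5/96) + |x| ^ 5 * (5/96) := by ring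
        _ ≤ |x| ^ 4 * (5/96) + |x| ^ 4 * (5/96) := by gcongr
        _ = |x| * (10/96) * |x| ^ 3 := by ring
    exact tendsto_sub_nhds_zero_iff.mp (squeeze_zero_norm' hb (by simpa using aux_abs_tendsto.mul_const (10/96 : ℝ)))
  have hcos : Tendsto (fun x : ℝ => (Real.cos x)⁻¹) (𝓝[≠] (0:ℝ)) (𝓝 1) := by
    have h : Tendsto Real.cos (𝓝[≠] (0:ℝ)) (𝓝 1) :=
      (Real.continuous_cos.tendsto' 0 1 (by simp)).mono_left nhdsWithin_le_nhds
    simpa using h.inv₀ one_ne_zero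
  have hcosne : ∀ᶠ x : ℝ in 𝓝[≠] (0:ℝ), Real.cos x ≠ 0 := by
    have h : Tendsto Real.cos (𝓝[≠] (0:ℝ)) (𝓝 1) :=
      (Real.continuous_cos.tendsto' 0 1 (by simp)).mono_left nhdsWithin_le_nhds
    exact h.eventually_ne one_ne_zero  -- maybe wrong name
  have := hmid.mul hcos
  rw [mul_one] at this
  apply this.congr'
  filter_upwards [hcosne, eventually_mem_nhdsWithin] with x hc (hx0 : x ≠ 0)
  rw [Real.tan_eq_sin_div_cos]
  field_simp

lemma aux_sin_div : Tendsto (fun x : ℝ => Real.sin x / x) (𝓝[≠] (0:ℝ)) (𝓝 1) := by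
  have h := (Real.hasDerivAt_sin 0)
  rw [hasDerivAt_iff_tendsto_slope] at h
  simpa [slope_fun_def, div_eq_inv_mul, Real.cos_zero] using h

lemma aux_tan_div : Tendsto (fun x : ℝ => Real.tan x / x) (𝓝[≠] (0:ℝ)) (𝓝 1) := by
  have h := Real.hasDerivAt_tan (x := 0) (by simp)
  rw [hasDerivAt_iff_tendsto_slope] at h
  simpa [slope_fun_def, div_eq_inv_mul, Real.tan_zero] using h

lemma aux_nat_inv : Tendsto (fun n : ℕ => ((n:ℝ))⁻¹) atTop (𝓝 0) :=
  tendsto_inv_atTop_zero.comp tendsto_natCast_atTop_atTop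

lemma aux_nat1_atTop : Tendsto (fun n : ℕ => (n:ℝ)+1) atTop atTop :=
  tendsto_atTop_add_const_right _ 1 tendsto_natCast_atTop_atTop

lemma aux_nat1_inv : Tendsto (fun n : ℕ => ((n:ℝ)+1)⁻¹) atTop (𝓝 0) :=
  tendsto_inv_atTop_zero.comp aux_nat1_atTop

lemma aux_ratio : Tendsto (fun n : ℕ => (n:ℝ)/((n:ℝ)+1)) atTop (𝓝 1) := by
  have h : Tendsto (fun n : ℕ => 1 - ((n:ℝ)+1)⁻¹) atTop (𝓝 (1 - 0)) :=
    tendsto_const_nhds.sub aux_nat1_inv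
  rw [sub_zero] at h
  apply h.congr
  intro n
  have h1 : ((n:ℝ)+1) ≠ 0 := by positivity
  field_simp
  ring

lemma aux_log_taylor {m : ℝ} (hm : 2 ≤ m) :
    |m * Real.log ((m+1)/m) - (1 - 1/(2*m) + 1/(3*m^2))| ≤ 1/(m^2*(m-1)) := by
  have hm0 : (0:ℝ) < m := by linarith
  have hm1 : (0:ℝ) < m - 1 := by linarith
  have hx : |(-1/m : ℝ)| < 1 := by
    rw [abs_div, abs_neg, abs_one, abs_of_pos hm0, div_lt_one hm0]; linarith
  have h := Real.abs_log_sub_add_sum_range_le hx 3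
  have hsum : (∑ i ∈ Finset.range 3, (-1/m) ^ (i+1) / ((i:ℝ)+1))
      = -1/m + 1/(2*m^2) - 1/(3*m^3) := by
    rw [Finset.sum_range_succ, Finset.sum_range_succ, Finset.sum_range_succ,
      Finset.sum_range_zero]
    push_cast
    field_simp
    ring
  have h1m : (1 : ℝ) - (-1/m) = (m+1)/m := by field_simp; ring
  have habs : |(-1/m : ℝ)| = 1/m := by
    rw [abs_div, abs_neg, abs_one, abs_of_pos hm0]
  rw [hsum, h1m, habs] at h
  have hrhs : ((1:ℝ)/m)^4/(1-1/m) = 1/(m^3*(m-1)) := by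
    have hd : (0:ℝ) < 1 - 1/m := by
      have : 1/m < 1 := by rw [div_lt_one hm0]; linarith
      linarith
    rw [div_eq_div_iff (ne_of_gt hd) (by positivity : (m^3*(m-1)) ≠ 0)]
    field_simp
  rw [hrhs] at h
  have key : m * Real.log ((m+1)/m) - (1 - 1/(2*m) + 1/(3*m^2))
      = m * ((-1/m + 1/(2*m^2) - 1/(3*m^3)) + Real.log ((m+1)/m)) := by
    field_simp
    ring
  rw [key, abs_mul, abs_of_pos hm0]
  have hfin : m * (1/(m^3*(m-1))) = 1/(m^2*(m-1)) := by
    field_simp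
  calc m * |(-1/m + 1/(2*m^2) - 1/(3*m^3)) + Real.log ((m+1)/m)|
      ≤ m * (1/(m^3*(m-1))) := by gcongr
    _ = 1/(m^2*(m-1)) := hfin

lemma aux_log_diff :
    Tendsto (fun n : ℕ => (n:ℝ)^2 * ((n:ℝ) * Real.log (((n:ℝ)+1)/(n:ℝ)) -
      ((n:ℝ)+1) * Real.log (((n:ℝ)+2)/((n:ℝ)+1)))) atTop (𝓝 (-(1/2))) := by
  set e : ℝ → ℝ := fun m => m * Real.log ((m+1)/m) - (1 - 1/(2*m) + 1/(3*m^2)) with he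
  have hM : Tendsto (fun n : ℕ =>
      -(1/2)*((n:ℝ)/((n:ℝ)+1)) + 1/3 - (1/3)*((n:ℝ)/((n:ℝ)+1))^2) atTop
      (𝓝 (-(1/2)*1 + 1/3 - (1/3)*1^2)) :=
    ((aux_ratio.const_mul (-(1/2):ℝ)).add tendsto_const_nhds).sub
      ((aux_ratio.pow 2).const_mul (1/3:ℝ))
  have hb1 : Tendsto (fun n : ℕ => 1/((n:ℝ)-1)) atTop (𝓝 0) := by
    have h := (tendsto_atTop_add_const_right atTop (-1:ℝ)
      tendsto_natCast_atTop_atTop).inv_tendsto_atTop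
    apply h.congr
    intro n
    simp [one_div, sub_eq_add_neg]
  have hb2 : Tendsto (fun n : ℕ => (n:ℝ)/((n:ℝ)+1)^2) atTop (𝓝 0) := by
    have h := aux_ratio.mul aux_nat1_inv
    rw [mul_zero] at h
    apply h.congr
    intro n
    rw [pow_two, ← div_div, div_eq_mul_inv, div_eq_mul_inv]
  have hR : Tendsto (fun n : ℕ => (n:ℝ)^2 * (e (n:ℝ) - e ((n:ℝ)+1))) atTop (𝓝 0) := by
    have hb : ∀ᶠ n : ℕ in atTop,
        ‖(n:ℝ)^2 * (e (n:ℝ) - e ((n:ℝ)+1))‖ ≤ 1/((n:ℝ)-1) + (n:ℝ)/((n:ℝ)+1)^2 := by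
      filter_upwards [eventually_ge_atTop 2] with n hn
      have hn2 : (2:ℝ) ≤ (n:ℝ) := by exact_mod_cast hn
      have hn0 : (0:ℝ) < (n:ℝ) := by linarith
      have hn1 : (0:ℝ) < (n:ℝ) - 1 := by linarith
      have he1 := aux_log_taylor hn2
      have he2 := aux_log_taylor (show (2:ℝ) ≤ (n:ℝ)+1 by linarith)
      rw [Real.norm_eq_abs, abs_mul, abs_pow, abs_of_pos hn0]
      calc (n:ℝ)^2 * |e (n:ℝ) - e ((n:ℝ)+1)|
          ≤ (n:ℝ)^2 * (|e (n:ℝ)| + |e ((n:ℝ)+1)|) := by gcongr; exact abs_sub _ _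
        _ ≤ (n:ℝ)^2 * (1/((n:ℝ)^2*((n:ℝ)-1)) + 1/(((n:ℝ)+1)^2*(((n:ℝ)+1)-1))) := by
            gcongr
        _ = 1/((n:ℝ)-1) + (n:ℝ)/((n:ℝ)+1)^2 := by
            have h2 : (n:ℝ) ≠ 0 := ne_of_gt hn0
            have h1 : ((n:ℝ)+1) ≠ 0 := by positivity
            field_simp
            congr 1
            rw [show (n:ℝ)+1-1 = n by ring, div_eq_iff h2]
            ring
    have h0 := hb1.add hb2
    rw [add_zero] at h0
    exact squeeze_zero_norm' hb h0
  have hsum := hM.add hR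
  have hval : (-(1/2)*1 + 1/3 - (1/3)*1^2 + 0 : ℝ) = -(1/2) := by norm_num
  rw [hval] at hsum
  apply hsum.congr'
  filter_upwards [eventually_ge_atTop 1] with n hn
  have hn0 : ((n:ℝ)) ≠ 0 := by
    have : (1:ℝ) ≤ (n:ℝ) := by exact_mod_cast hn
    linarith
  have hn1 : ((n:ℝ)+1) ≠ 0 := by positivity
  simp only [he]
  rw [show ((n:ℝ)+1+1) = ((n:ℝ)+2) by ring]
  field_simp
  ring


/-- Asymptotic expansion of `|δ_n(z)|` for `z = 1 + i·y`:
`n² · |1/((n+1)·tan(|y|·ln((n+2)/(n+1)))) − √(1/n² + 1/(n²·tan(|y|·ln((n+1)/n))²))|`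
converges to `(1/2)·|y + 1/y|`. -/
theorem abs_delta_line_one_asymptotic (y : ℝ) (hy : y ≠ 0) :
    Tendsto (fun n : ℕ =>
      (n : ℝ) ^ 2 *
        |1 / (((n : ℝ) + 1) *
            Real.tan (|y| * Real.log (((n : ℝ) + 2) / ((n : ℝ) + 1)))) -
          Real.sqrt (1 / (n : ℝ) ^ 2 +
            1 / ((n : ℝ) ^ 2 *
              Real.tan (|y| * Real.log (((n : ℝ) + 1) / (n : ℝ))) ^ 2))|)
      atTop (nhds (|y + 1 / y| / 2)) := by
  set a := |y| with hay
  have ha : 0 < a := abs_pos.mpr hy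
  set t : ℕ → ℝ := fun n => a * Real.log (((n:ℝ)+1)/(n:ℝ)) with ht
  set s : ℕ → ℝ := fun n => a * Real.log (((n:ℝ)+2)/((n:ℝ)+1)) with hs
  have hpi : (1:ℝ) < Real.pi/2 := by have := Real.pi_gt_three; linarith
  have hlog1 : Tendsto (fun n : ℕ => (n:ℝ) * Real.log (((n:ℝ)+1)/(n:ℝ))) atTop (𝓝 1) := by
    have h := (Real.tendsto_mul_log_one_add_div_atTop 1).comp tendsto_natCast_atTop_atTop
    apply h.congr'
    filter_upwards [eventually_ge_atTop 1] with n hn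
    have hn0 : ((n:ℝ)) ≠ 0 := by
      have : (1:ℝ) ≤ (n:ℝ) := by exact_mod_cast hn
      linarith
    simp only [Function.comp_apply]
    rw [show (1 + 1/(n:ℝ)) = ((n:ℝ)+1)/(n:ℝ) by field_simp]
  have hlog2 : Tendsto (fun n : ℕ => ((n:ℝ)+1) * Real.log (((n:ℝ)+2)/((n:ℝ)+1))) atTop
      (𝓝 1) := by
    have h := (Real.tendsto_mul_log_one_add_div_atTop 1).comp aux_nat1_atTop
    apply h.congr
    intro n
    have hn1 : ((n:ℝ)+1) ≠ 0 := by positivity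
    simp only [Function.comp_apply]
    rw [show (1 + 1/((n:ℝ)+1)) = ((n:ℝ)+2)/((n:ℝ)+1) by field_simp; ring]
  have hnt : Tendsto (fun n : ℕ => (n:ℝ) * t n) atTop (𝓝 a) := by
    have h := hlog1.const_mul a
    rw [mul_one] at h
    apply h.congr
    intro n
    simp only [ht]
    ring
  have hns : Tendsto (fun n : ℕ => ((n:ℝ)+1) * s n) atTop (𝓝 a) := by
    have h := hlog2.const_mul a
    rw [mul_one] at h
    apply h.congr
    intro n
    simp only [hs]
    ring
  have ht0 : Tendsto t atTop (𝓝 0) := by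
    have h := hnt.mul aux_nat_inv
    rw [mul_zero] at h
    apply h.congr'
    filter_upwards [eventually_ge_atTop 1] with n hn
    have hn0 : ((n:ℝ)) ≠ 0 := by
      have : (1:ℝ) ≤ (n:ℝ) := by exact_mod_cast hn
      linarith
    rw [mul_comm ((n:ℝ)) (t n), mul_assoc, mul_inv_cancel₀ hn0, mul_one]
  have hs0 : Tendsto s atTop (𝓝 0) := by
    have h := hns.mul aux_nat1_inv
    rw [mul_zero] at h
    apply h.congr
    intro n
    have hn1 : ((n:ℝ)+1) ≠ 0 := by positivity
    rw [mul_comm (((n:ℝ)+1)) (s n), mul_assoc, mul_inv_cancel₀ hn1, mul_one]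
  have ht_pos : ∀ᶠ n : ℕ in atTop, 0 < t n := by
    filter_upwards [eventually_ge_atTop 1] with n hn
    have hn0 : (0:ℝ) < (n:ℝ) := by exact_mod_cast Nat.lt_of_lt_of_le Nat.zero_lt_one hn
    exact mul_pos ha (Real.log_pos (by rw [lt_div_iff₀ hn0]; linarith))
  have hs_pos : ∀ n : ℕ, 0 < s n := by
    intro n
    have hn1 : (0:ℝ) < (n:ℝ)+1 := by positivity
    exact mul_pos ha (Real.log_pos (by rw [lt_div_iff₀ hn1]; linarith))
  have ht_lt : ∀ᶠ n : ℕ in atTop, t n < 1 := ht0.eventually_lt_const (by norm_num)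
  have hs_lt : ∀ᶠ n : ℕ in atTop, s n < 1 := hs0.eventually_lt_const (by norm_num)
  have ht0' : Tendsto t atTop (𝓝[≠] (0:ℝ)) := by
    rw [tendsto_nhdsWithin_iff]
    exact ⟨ht0, ht_pos.mono fun n hn => ne_of_gt hn⟩
  have hs0' : Tendsto s atTop (𝓝[≠] (0:ℝ)) := by
    rw [tendsto_nhdsWithin_iff]
    exact ⟨hs0, Eventually.of_forall fun n => ne_of_gt (hs_pos n)⟩
  have hsin_n : Tendsto (fun n : ℕ => (n:ℝ) * Real.sin (t n)) atTop (𝓝 a) := by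
    have h := hnt.mul (aux_sin_div.comp ht0')
    rw [mul_one] at h
    apply h.congr'
    filter_upwards [ht_pos] with n htn
    have h0 : t n ≠ 0 := ne_of_gt htn
    simp only [Function.comp_apply]
    field_simp
  have htan_n : Tendsto (fun n : ℕ => ((n:ℝ)+1) * Real.tan (s n)) atTop (𝓝 a) := by
    have h := hns.mul (aux_tan_div.comp hs0')
    rw [mul_one] at h
    apply h.congr
    intro n
    have h0 : s n ≠ 0 := ne_of_gt (hs_pos n)
    simp only [Function.comp_apply]
    field_simp
  have hden : Tendsto (fun n : ℕ => (((n:ℝ)+1) * Real.tan (s n)) * ((n:ℝ) * Real.sin (t n)))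
      atTop (𝓝 (a*a)) := htan_n.mul hsin_n
  have hP1 : Tendsto (fun n : ℕ => (n:ℝ)^3 * (Real.sin (t n) - t n)) atTop
      (𝓝 (-(1/6) * a^3)) := by
    have h := (aux_sin_cube.comp ht0').mul (hnt.pow 3)
    apply h.congr'
    filter_upwards [ht_pos] with n htn
    have h3 : (t n)^3 ≠ 0 := pow_ne_zero _ (ne_of_gt htn)
    simp only [Function.comp_apply]
    field_simp
  have hP3 : Tendsto (fun n : ℕ => (n:ℝ)^2 * ((n:ℝ)+1) * (s n - Real.tan (s n))) atTop
      (𝓝 (-(1/3 * a^3 * 1^2))) := by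
    have h := (((aux_tan_cube.comp hs0').mul (hns.pow 3)).mul (aux_ratio.pow 2)).neg
    apply h.congr'
    filter_upwards [eventually_ge_atTop 1] with n hn
    have hsn : (s n)^3 ≠ 0 := pow_ne_zero _ (ne_of_gt (hs_pos n))
    have hsn0 : s n ≠ 0 := ne_of_gt (hs_pos n)
    have hn1 : ((n:ℝ)+1) ≠ 0 := by positivity
    simp only [Function.comp_apply]
    field_simp
    ring
  have hP2 : Tendsto (fun n : ℕ => (n:ℝ)^2 * ((n:ℝ) * t n - ((n:ℝ)+1) * s n)) atTop
      (𝓝 (a * -(1/2))) := by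
    have h := aux_log_diff.const_mul a
    apply h.congr
    intro n
    simp only [ht, hs]
    ring
  have hN : Tendsto (fun n : ℕ =>
      (n:ℝ)^2 * ((n:ℝ) * Real.sin (t n) - ((n:ℝ)+1) * Real.tan (s n))) atTop
      (𝓝 (-(1/6) * a^3 + a * -(1/2) + -(1/3 * a^3 * 1^2))) := by
    have h := (hP1.add hP2).add hP3
    apply h.congr
    intro n
    ring
  have hfin : Tendsto (fun n : ℕ =>
      |(n:ℝ)^2 * ((n:ℝ) * Real.sin (t n) - ((n:ℝ)+1) * Real.tan (s n))| /
        ((((n:ℝ)+1) * Real.tan (s n)) * ((n:ℝ) * Real.sin (t n)))) atTop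
      (𝓝 (|(-(1/6) * a^3 + a * -(1/2) + -(1/3 * a^3 * 1^2))| / (a*a))) :=
    hN.abs.div hden (ne_of_gt (mul_pos ha ha))
  have hval : |(-(1/6) * a^3 + a * -(1/2) + -(1/3 * a^3 * 1^2) : ℝ)| / (a*a)
      = |y + 1/y| / 2 := by
    have hc : (-(1/6) * a^3 + a * -(1/2) + -(1/3 * a^3 * 1^2) : ℝ) = -(a^3/2 + a/2) := by ring
    rw [hc, abs_neg, abs_of_pos (by positivity)]
    have h2 : y + 1/y = (y^2+1)/y := by field_simp
    rw [h2, abs_div, abs_of_pos (show (0:ℝ) < y^2+1 by positivity), ← hay]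
    have hq : y^2 = a^2 := (sq_abs y).symm
    rw [hq]
    field_simp
  rw [hval] at hfin
  apply hfin.congr'
  filter_upwards [eventually_ge_atTop 1, ht_pos, ht_lt, hs_lt] with n hn htp htl hsl
  have hn0 : (0:ℝ) < (n:ℝ) := by exact_mod_cast Nat.lt_of_lt_of_le Nat.zero_lt_one hn
  have hsp := hs_pos n
  have hsin : 0 < Real.sin (t n) :=
    Real.sin_pos_of_pos_of_lt_pi htp (by have := Real.pi_gt_three; linarith)
  have hcos : 0 < Real.cos (t n) :=
    Real.cos_pos_of_mem_Ioo ⟨by linarith, by linarith⟩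
  have htan : 0 < Real.tan (s n) :=
    Real.tan_pos_of_pos_of_lt_pi_div_two hsp (by linarith)
  have htant : 0 < Real.tan (t n) :=
    Real.tan_pos_of_pos_of_lt_pi_div_two htp (by linarith)
  have hd1 : 0 < ((n:ℝ)+1) * Real.tan (s n) := mul_pos (by positivity) htan
  have hd2 : 0 < (n:ℝ) * Real.sin (t n) := mul_pos hn0 hsin
  have hsq : 1/(n:ℝ)^2 + 1/((n:ℝ)^2 * Real.tan (t n)^2)
      = (1/((n:ℝ) * Real.sin (t n)))^2 := by
    have hsc := Real.sin_sq_add_cos_sq (t n)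
    rw [Real.tan_eq_sin_div_cos]
    field_simp
    nlinarith [hsc, sq_nonneg ((n:ℝ) * Real.sin (t n)), sq_nonneg (Real.cos (t n))]
  have hsqrt : Real.sqrt (1/(n:ℝ)^2 + 1/((n:ℝ)^2 * Real.tan (t n)^2))
      = 1/((n:ℝ) * Real.sin (t n)) := by
    rw [hsq, Real.sqrt_sq (le_of_lt (div_pos one_pos hd2))]
  have hdiff : 1/(((n:ℝ)+1) * Real.tan (s n)) - 1/((n:ℝ) * Real.sin (t n))
      = ((n:ℝ) * Real.sin (t n) - ((n:ℝ)+1) * Real.tan (s n)) /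
        ((((n:ℝ)+1) * Real.tan (s n)) * ((n:ℝ) * Real.sin (t n))) := by
    rw [div_sub_div _ _ (ne_of_gt hd1) (ne_of_gt hd2)]
    rw [one_mul, mul_one]
  show _ = (n:ℝ)^2 * |1/(((n:ℝ)+1) * Real.tan (s n)) -
      Real.sqrt (1/(n:ℝ)^2 + 1/((n:ℝ)^2 * Real.tan (t n)^2))|
  rw [hsqrt, hdiff, abs_div, abs_of_pos (mul_pos hd1 hd2), abs_mul,
    abs_of_nonneg (by positivity : (0:ℝ) ≤ (n:ℝ)^2), mul_div_assoc]
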